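/- arXiv:1306.0018 — 3 statements merged into one kernel-verified Lean document; each statement's English description precedes it below -/
import Mathlib

section
/- Let L and L' be ijk-lists of quaternions over the integers. If L' is a permutation (rearrangement) of L, then the product of L' equals the product of L or equals the negative of the product of L. -/
open Quaternion

/-- The quaternion unit `i` over the integers. -/
def qi : ℍ[ℤ] := ⟨0, 1, 0, 0⟩

/-- The quaternion unit `j` over the integers. -/
def qj : ℍ[ℤ] := ⟨0, 0, 1, 0⟩

/-- The quaternion unit `k` over the integers. -/
def qk : ℍ[ℤ] := ⟨0, 0, 0, 1⟩

/-- A list of quaternions is an ijk-list if each element is `i`, `j` or `k`. -/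
def IsIJKList (L : List ℍ[ℤ]) : Prop := ∀ x ∈ L, x = qi ∨ x = qj ∨ x = qk

lemma comm_or_anticomm {x y : ℍ[ℤ]} (hx : x = qi ∨ x = qj ∨ x = qk)
    (hy : y = qi ∨ y = qj ∨ y = qk) : x * y = y * x ∨ x * y = -(y * x) := by
  rcases hx with rfl | rfl | rfl <;> rcases hy with rfl | rfl | rfl <;>
    first
    | (left; rfl)
    | (right; simp only [qi, qj, qk]; ext <;>
        rfl)

lemma perm_aux {L L' : List ℍ[ℤ]} (hperm : L.Perm L') (hL : IsIJKList L) :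
    L.prod = L'.prod ∨ L.prod = -L'.prod := by
  induction hperm with
  | nil => left; rfl
  | cons x p ih =>
      rcases ih (fun a ha => hL a (List.mem_cons_of_mem _ ha)) with h | h <;>
        simp [List.prod_cons, h]
  | swap x y l =>
      have hx := hL x (by simp)
      have hy := hL y (by simp)
      rcases comm_or_anticomm hy hx with h | h <;>
        simp [List.prod_cons, ← mul_assoc, h]
  | trans p q ih1 ih2 =>
      have hmid : IsIJKList _ := fun a ha => hL a (p.mem_iff.mpr ha)
      rcases ih1 hL with h1 | h1 <;> rcases ih2 hmid with h2 | h2 <;>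
        simp [h1, h2]

theorem perm_prod_eq_or_neg (L L' : List ℍ[ℤ]) (hL : IsIJKList L)
    (hperm : L'.Perm L) :
    L'.prod = L.prod ∨ L'.prod = -L.prod := by
  exact perm_aux hperm (fun a ha => hL a (hperm.mem_iff.mp ha))
end

section
/- Let L be an ijk-list of quaternions over the integers whose product equals i, and let L' be any permutation (rearrangement) of L. Then the product of L' equals i or -i; in particular the product of L' is not equal to j and not equal to k. (This is the paper's Lemma 1 in its quaternion representation: a validly typed ABC expression cannot be rearranged into a validly typed expression of a different type.) -/
open Quaternion

/-- Class of a quaternion in `Q8 / {±1} ≅ (ℤ/2)²` (meaningful on the 8 units). -/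
def qf (x : ℍ[ℤ]) : ZMod 2 × ZMod 2 := ((x.imI + x.imK : ℤ), (x.imJ + x.imK : ℤ))

/-- Membership in the quaternion group `Q8`. -/
def IsUnit8 (x : ℍ[ℤ]) : Prop :=
  x = 1 ∨ x = -1 ∨ x = qi ∨ x = -qi ∨ x = qj ∨ x = -qj ∨ x = qk ∨ x = -qk

lemma mul_step (x p : ℍ[ℤ]) (hx : x = qi ∨ x = qj ∨ x = qk) (hp : IsUnit8 p) :
    IsUnit8 (x * p) ∧ qf (x * p) = qf x + qf p := by
  unfold IsUnit8 qf at *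
  rcases hx with h|h|h <;> rcases hp with h'|h'|h'|h'|h'|h'|h'|h' <;> subst h h' <;>
    constructor <;>
    simp [QuaternionAlgebra.ext_iff, Quaternion.ext_iff, Prod.ext_iff,
      Quaternion.re_mul, Quaternion.imI_mul, Quaternion.imJ_mul, Quaternion.imK_mul] <;>
    decide

lemma prod_invariant (L : List ℍ[ℤ]) (hL : IsIJKList L) :
    IsUnit8 L.prod ∧ qf L.prod = (L.map qf).sum := by
  induction L with
  | nil =>
    constructor
    · left; rfl
    · simp [qf]
  | cons x t ih =>
    have hx := hL x (by simp)
    have ih' := ih (fun y hy => hL y (by simp [hy]))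
    obtain ⟨h1, h2⟩ := mul_step x t.prod hx ih'.1
    refine ⟨by simpa using h1, ?_⟩
    simp only [List.prod_cons, List.map_cons, List.sum_cons, h2, ih'.2]

theorem perm_of_prod_i (L L' : List ℍ[ℤ]) (hL : IsIJKList L)
    (hprod : L.prod = qi) (hperm : L'.Perm L) :
    (L'.prod = qi ∨ L'.prod = -qi) ∧ L'.prod ≠ qj ∧ L'.prod ≠ qk := by
  have hL' : IsIJKList L' := fun x hx => hL x (hperm.mem_iff.mp hx)
  obtain ⟨hu, hf⟩ := prod_invariant L' hL'
  obtain ⟨_, hfL⟩ := prod_invariant L hL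
  have hsum : (L'.map qf).sum = (L.map qf).sum := (hperm.map qf).sum_eq
  have hq : qf L'.prod = qf qi := by rw [hf, hsum, ← hfL, hprod]
  have hi : qf qi = (1, 0) := by decide
  have hj : qf qj = (0, 1) := by decide
  have hk : qf qk = (1, 1) := by decide
  constructor
  · rcases hu with h|h|h|h|h|h|h|h <;> rw [h] at hq ⊢ <;>
      first
        | (left; rfl)
        | (right; rfl)
        | (exfalso; revert hq; rw [hi]; decide)
  · constructor <;> intro h <;> rw [h] at hq <;> revert hq <;>
      rw [hi] <;> first | rw [hj] | rw [hk]
    all_goals decide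
end

section
/- Let L be an ijk-list of quaternions over the integers whose product equals i, and let L' be an ijk-list such that the number of occurrences of i in L and in L' have the same parity, and likewise for j and for k. Then the product of L' is not equal to j and not equal to k. (Combining Lemma 1 with the Remark: no parity-preserving replacement of elements can turn a type-A expression into one of type B or C in the ABC scheme.) -/
open Quaternion

instance : DecidableEq ℍ[ℤ] := fun _ _ => decidable_of_iff _ QuaternionAlgebra.ext_iff.symm

/-- The unit associated to a parity vector. -/
def qunit (a b : ZMod 2) : ℍ[ℤ] :=
  if a = 0 then (if b = 0 then 1 else qj) else (if b = 0 then qi else qk)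

lemma qii : qi * qi = -1 := by ext <;> simp [qi] <;> rfl
lemma qjj : qj * qj = -1 := by ext <;> simp [qj] <;> rfl
lemma qkk : qk * qk = -1 := by ext <;> simp [qk] <;> rfl
lemma qij : qi * qj = qk := by ext <;> simp [qi, qj, qk] <;> rfl
lemma qji : qj * qi = -qk := by ext <;> simp [qi, qj, qk] <;> rfl
lemma qjk : qj * qk = qi := by ext <;> simp [qi, qj, qk] <;> rfl
lemma qkj : qk * qj = -qi := by ext <;> simp [qi, qj, qk] <;> rfl
lemma qki : qk * qi = qj := by ext <;> simp [qi, qj, qk] <;> rfl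
lemma qik : qi * qk = -qj := by ext <;> simp [qi, qj, qk] <;> rfl

lemma qine : qi ≠ qj ∧ qi ≠ qk ∧ qj ≠ qk ∧ qi ≠ 1 ∧ qi ≠ -1 ∧ qi ≠ -qj ∧ qi ≠ -qk := by
  refine ⟨?_, ?_, ?_, ?_, ?_, ?_, ?_⟩ <;> intro h <;>
    first
      | exact absurd (congrArg QuaternionAlgebra.imI h) (by decide)
      | exact absurd (congrArg QuaternionAlgebra.imJ h) (by decide)

lemma stepi (a b : ZMod 2) (p : ℍ[ℤ]) (hp : p = qunit a b ∨ p = -qunit a b) :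
    qi * p = qunit (a + 1) b ∨ qi * p = -qunit (a + 1) b := by
  fin_cases a <;> fin_cases b <;> rcases hp with h | h <;> subst h <;>
    simp [qunit, mul_neg, qii, qij, qik] <;>
    first
    | (left; rfl)
    | (right; rfl)

lemma stepj (a b : ZMod 2) (p : ℍ[ℤ]) (hp : p = qunit a b ∨ p = -qunit a b) :
    qj * p = qunit a (b + 1) ∨ qj * p = -qunit a (b + 1) := by
  fin_cases a <;> fin_cases b <;> rcases hp with h | h <;> subst h <;>
    simp [qunit, mul_neg, qjj, qji, qjk] <;>
    first
    | (left; rfl)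
    | (right; rfl)

lemma stepk (a b : ZMod 2) (p : ℍ[ℤ]) (hp : p = qunit a b ∨ p = -qunit a b) :
    qk * p = qunit (a + 1) (b + 1) ∨ qk * p = -qunit (a + 1) (b + 1) := by
  fin_cases a <;> fin_cases b <;> rcases hp with h | h <;> subst h <;>
    simp [qunit, mul_neg, qkk, qki, qkj] <;>
    first
    | (left; rfl)
    | (right; rfl)

lemma key (L : List ℍ[ℤ]) (hL : IsIJKList L) :
    L.prod = qunit ((L.count qi + L.count qk : ℕ) : ZMod 2)
        ((L.count qj + L.count qk : ℕ) : ZMod 2) ∨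
    L.prod = -qunit ((L.count qi + L.count qk : ℕ) : ZMod 2)
        ((L.count qj + L.count qk : ℕ) : ZMod 2) := by
  obtain ⟨hij, hik, hjk, -⟩ := qine
  induction L with
  | nil => left; simp [qunit]
  | cons x L ih =>
    have ih' := ih (fun y hy => hL y (List.mem_cons_of_mem x hy))
    rcases hL x (List.mem_cons_self) with hx | hx | hx <;> subst hx
    · have e1 : ((List.count qi (qi :: L) + List.count qk (qi :: L) : ℕ) : ZMod 2)
          = ((L.count qi + L.count qk : ℕ) : ZMod 2) + 1 := by
        rw [List.count_cons_self, List.count_cons_of_ne hik]; push_cast; ring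
      have e2 : ((List.count qj (qi :: L) + List.count qk (qi :: L) : ℕ) : ZMod 2)
          = ((L.count qj + L.count qk : ℕ) : ZMod 2) := by
        rw [List.count_cons_of_ne hij, List.count_cons_of_ne hik]
      rw [List.prod_cons, e1, e2]
      exact stepi _ _ _ ih'
    · have e1 : ((List.count qi (qj :: L) + List.count qk (qj :: L) : ℕ) : ZMod 2)
          = ((L.count qi + L.count qk : ℕ) : ZMod 2) := by
        rw [List.count_cons_of_ne (Ne.symm hij), List.count_cons_of_ne hjk]
      have e2 : ((List.count qj (qj :: L) + List.count qk (qj :: L) : ℕ) : ZMod 2)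
          = ((L.count qj + L.count qk : ℕ) : ZMod 2) + 1 := by
        rw [List.count_cons_self, List.count_cons_of_ne hjk]; push_cast; ring
      rw [List.prod_cons, e1, e2]
      exact stepj _ _ _ ih'
    · have e1 : ((List.count qi (qk :: L) + List.count qk (qk :: L) : ℕ) : ZMod 2)
          = ((L.count qi + L.count qk : ℕ) : ZMod 2) + 1 := by
        rw [List.count_cons_of_ne (Ne.symm hik), List.count_cons_self]; push_cast; ring
      have e2 : ((List.count qj (qk :: L) + List.count qk (qk :: L) : ℕ) : ZMod 2)
          = ((L.count qj + L.count qk : ℕ) : ZMod 2) + 1 := by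
        rw [List.count_cons_of_ne (Ne.symm hjk), List.count_cons_self]; push_cast; ring
      rw [List.prod_cons, e1, e2]
      exact stepk _ _ _ ih'

theorem parity_of_prod_i_ne_j_ne_k (L L' : List ℍ[ℤ]) (hL : IsIJKList L) (hL' : IsIJKList L')
    (hprod : L.prod = qi)
    (hi : L.count qi % 2 = L'.count qi % 2)
    (hj : L.count qj % 2 = L'.count qj % 2)
    (hk : L.count qk % 2 = L'.count qk % 2) :
    L'.prod ≠ qj ∧ L'.prod ≠ qk := by
  obtain ⟨hij, hik, hjk, hi1, hin1, hinj, hink⟩ := qine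
  have ci : ((L.count qi : ZMod 2)) = (L'.count qi : ZMod 2) :=
    (ZMod.natCast_eq_natCast_iff' _ _ _).2 hi
  have cj : ((L.count qj : ZMod 2)) = (L'.count qj : ZMod 2) :=
    (ZMod.natCast_eq_natCast_iff' _ _ _).2 hj
  have ck : ((L.count qk : ZMod 2)) = (L'.count qk : ZMod 2) :=
    (ZMod.natCast_eq_natCast_iff' _ _ _).2 hk
  have h1 := key L hL
  have h2 := key L' hL'
  rw [hprod] at h1
  push_cast at h1 h2
  rw [ci, cj, ck] at h1
  generalize hA : (L'.count qi : ZMod 2) + (L'.count qk : ZMod 2) = a at h1 h2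
  generalize hB : (L'.count qj : ZMod 2) + (L'.count qk : ZMod 2) = b at h1 h2
  have hab : a = 1 ∧ b = 0 := by
    fin_cases a <;> fin_cases b <;> simp_all +decide [qunit] <;> exact ⟨rfl, rfl⟩
  rw [hab.1, hab.2] at h2
  simp only [qunit, one_ne_zero, if_false, if_pos rfl, ite_true] at h2
  constructor
  · rcases h2 with h | h <;> rw [h]
    · exact hij
    · intro h'; exact absurd (congrArg QuaternionAlgebra.imI h') (by decide)
  · rcases h2 with h | h <;> rw [h]
    · exact hik
    · intro h'; exact absurd (congrArg QuaternionAlgebra.imI h') (by decide)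
end
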